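/- Let (V, μ, α) be a Hom-associative algebra over a field K and define the commutator bracket [x,y] := μ(x,y) − μ(y,x). Then (V, [·,·], α) is a Hom-Lie algebra: the bracket is skew-symmetric, [x,y] = −[y,x], and satisfies the Hom-Jacobi identity [α(x),[y,z]] + [α(y),[z,x]] + [α(z),[x,y]] = 0 for all x, y, z ∈ V. -/
import Mathlib


/-- The commutator bracket of a bilinear multiplication. -/
def commBr {K V : Type*} [Field K] [AddCommGroup V] [Module K V]
    (μ : V →ₗ[K] V →ₗ[K] V) (x y : V) : V :=
  μ x y - μ y x

/-- the commutator bracket of a Hom-associative algebra (V, μ, α) makes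
(V, [·,·], α) a Hom-Lie algebra: it is skew-symmetric and satisfies the Hom-Jacobi
identity. -/
theorem stmt4 {K V : Type*} [Field K] [AddCommGroup V] [Module K V]
    (μ : V →ₗ[K] V →ₗ[K] V) (α : V →ₗ[K] V)
    (hassoc : ∀ x y z : V, μ (α x) (μ y z) = μ (μ x y) (α z)) :
    (∀ x y : V, commBr μ x y = -commBr μ y x) ∧
    (∀ x y z : V,
      commBr μ (α x) (commBr μ y z) + commBr μ (α y) (commBr μ z x)
        + commBr μ (α z) (commBr μ x y) = 0) := by
  constructor
  · intro x y; simp [commBr]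
  · intro x y z
    simp only [commBr, map_sub, LinearMap.sub_apply]
    have h1 := hassoc x y z
    have h2 := hassoc x z y
    have h3 := hassoc y z x
    have h4 := hassoc y x z
    have h5 := hassoc z x y
    have h6 := hassoc z y x
    abel_nf
    rw [h1, h2, h3, h4, h5, h6]
    abel
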